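/- Define FS_{i≤n}(A_i) by recursion: FS_{i≤0} = 1 and FS_{i≤n} = (FS_{i≤n-1} × A_n) + (A_0 × ⋯ × A_{n-1}), with canonical map γ_n : FS_{i≤n}(A_i) → A_0 × ⋯ × A_n, and let ⋀̃_{i≤n} A_i be the cofibre of γ_n. Then the composite FS_{i≤n}(A_i) → A_0 × ⋯ × A_n → ⋀_{i≤n} A_i (into the iterated left-associated smash product) is null-homotopic, yielding a basepoint-preserving map ι : ⋀̃_{i≤n} A_i → ⋀_{i≤n} A_i with ι⟨a_0,…,a_n⟩ = ⟨a_0,…,a_n⟩. -/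

import Mathlib

universe u

namespace SmashPaper

/-- Relation generating the wedge `A ∨ B` as a quotient of `A ⊕ B`. -/
inductive WedgeRel (A B : Pointed.{u}) : (A ⊕ B) → (A ⊕ B) → Prop
  | glue : WedgeRel A B (Sum.inl A.point) (Sum.inr B.point)

/-- The wedge sum `A ∨ B` of pointed types. -/
def Wedge (A B : Pointed.{u}) : Type u := Quot (WedgeRel A B)

/-- The inclusion `A ∨ B → A × B`. -/
def wedgeIncl (A B : Pointed.{u}) : Wedge A B → A × B :=
  Quot.lift (Sum.elim (fun a => (a, B.point)) (fun b => (A.point, b)))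
    (by rintro _ _ ⟨⟩; rfl)

/-- The relation generating the cofibre of a map `f : W → P`. -/
inductive CofiberRel {W P : Type u} (f : W → P) : (P ⊕ PUnit) → (P ⊕ PUnit) → Prop
  | glue (w : W) : CofiberRel f (Sum.inl (f w)) (Sum.inr PUnit.unit)

/-- The cofibre (mapping cone) of `f`, i.e. the pushout of `1 ← W → P`. -/
def Cofiber {W P : Type u} (f : W → P) : Type u := Quot (CofiberRel f)

/-- The cofibre point. -/
def Cofiber.base {W P : Type u} (f : W → P) : Cofiber f := Quot.mk _ (Sum.inr PUnit.unit)

/-- The inclusion of `P` into the cofibre of `f : W → P`. -/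
def Cofiber.incl {W P : Type u} (f : W → P) (p : P) : Cofiber f := Quot.mk _ (Sum.inl p)

/-- The smash product `A ∧ B`: the cofibre of the inclusion `A ∨ B → A × B`. -/
def Smash (A B : Pointed.{u}) : Type u := Cofiber (wedgeIncl A B)

/-- The point constructor `⟨a, b⟩` of `A ∧ B`. -/
def Smash.mk {A B : Pointed.{u}} (a : A) (b : B) : Smash A B :=
  Quot.mk _ (Sum.inl (a, b))

/-- The basepoint `⋆∧` of `A ∧ B`. -/
def Smash.pt {A B : Pointed.{u}} : Smash A B := Quot.mk _ (Sum.inr PUnit.unit)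

/-- `A ∧ B` as a pointed type. -/
def pSmash (A B : Pointed.{u}) : Pointed.{u} := ⟨Smash A B, Smash.pt⟩

theorem Smash.pushl {A B : Pointed.{u}} (a : A) :
    Smash.mk a B.point = (Smash.pt : Smash A B) :=
  Quot.sound (CofiberRel.glue (Quot.mk _ (Sum.inl a)))

theorem Smash.pushr {A B : Pointed.{u}} (b : B) :
    Smash.mk A.point b = (Smash.pt : Smash A B) :=
  Quot.sound (CofiberRel.glue (Quot.mk _ (Sum.inr b)))

/-- Functorial action of the smash product on pointed maps. -/
def smashMap {A B C D : Pointed.{u}} (f : Pointed.Hom A C) (g : Pointed.Hom B D) :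
    Pointed.Hom (pSmash A B) (pSmash C D) where
  toFun := Quot.lift
    (Sum.elim (fun p => Smash.mk (f.toFun p.1) (g.toFun p.2)) (fun _ => Smash.pt))
    (by
      rintro _ _ ⟨w⟩
      induction w using Quot.ind with
      | mk x =>
        rcases x with a | b
        · show Smash.mk (f.toFun a) (g.toFun B.point) = Smash.pt
          rw [g.map_point]; exact Smash.pushl _
        · show Smash.mk (f.toFun A.point) (g.toFun b) = Smash.pt
          rw [f.map_point]; exact Smash.pushr _)
  map_point := rfl

/-- The braiding `β : A ∧ B → B ∧ A` induced by the swap map on products. -/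
def braidHom (A B : Pointed.{u}) : Pointed.Hom (pSmash A B) (pSmash B A) where
  toFun := Quot.lift
    (Sum.elim (fun p => Smash.mk p.2 p.1) (fun _ => Smash.pt))
    (by
      rintro _ _ ⟨w⟩
      induction w using Quot.ind with
      | mk x =>
        rcases x with a | b
        · exact Smash.pushr a
        · exact Smash.pushl b)
  map_point := rfl

/-- Auxiliary map for the associator. -/
def assocAux {A B C : Pointed.{u}} (x : Smash A B) (c : C) : Smash A (pSmash B C) :=
  Quot.lift
    (Sum.elim (fun p => Smash.mk (B := pSmash B C) p.1 (Smash.mk p.2 c)) (fun _ => Smash.pt))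
    (by
      rintro _ _ ⟨w⟩
      induction w using Quot.ind with
      | mk y =>
        rcases y with a | b
        · show Smash.mk (B := pSmash B C) a (Smash.mk B.point c) = Smash.pt
          rw [Smash.pushr]; exact Smash.pushl a
        · exact Smash.pushr _) x

/-- The associator `α : (A ∧ B) ∧ C → A ∧ (B ∧ C)`. -/
def assocHom (A B C : Pointed.{u}) :
    Pointed.Hom (pSmash (pSmash A B) C) (pSmash A (pSmash B C)) where
  toFun := Quot.lift
    (Sum.elim (fun p => assocAux p.1 p.2) (fun _ => Smash.pt))
    (by
      rintro _ _ ⟨w⟩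
      induction w using Quot.ind with
      | mk y =>
        rcases y with x | c
        · show assocAux x C.point = Smash.pt
          induction x using Quot.ind with
          | mk z =>
            rcases z with p | u
            · show Smash.mk (B := pSmash B C) p.1 (Smash.mk p.2 C.point) = Smash.pt
              rw [Smash.pushl]; exact Smash.pushl p.1
            · rfl
        · rfl)
  map_point := rfl

theorem assocHom_mk {A B C : Pointed.{u}} (a : A) (b : B) (c : C) :
    (assocHom A B C).toFun (Smash.mk (Smash.mk a b) c) = Smash.mk (B := pSmash B C) a (Smash.mk b c) :=
  rfl

/-- Pointed equivalences. -/
structure PtdEquiv (A B : Pointed.{u}) where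
  toEquiv : A ≃ B
  map_point : toEquiv A.point = B.point

/-- The pointed booleans `𝟚`, the unit for the smash product. -/
def pBool : Pointed.{0} := ⟨Bool, true⟩


/-- `FS_{i ≤ n}(A_i)`, defined by recursion. -/
def FS (A : ℕ → Pointed.{u}) : ℕ → Type u
  | 0 => PUnit
  | n+1 => (FS A n × A (n+1)) ⊕ (∀ i : Fin (n+1), A i)

/-- The canonical map `γ_n : FS_{i ≤ n}(A_i) → A_0 × ⋯ × A_n`. -/
def gamma (A : ℕ → Pointed.{u}) : (n : ℕ) → FS A n → (∀ i : Fin (n+1), A i)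
  | 0, _ => fun i => (A i).point
  | n+1, Sum.inl (x, a) => Fin.snoc (gamma A n x) a
  | n+1, Sum.inr v => Fin.snoc v (A (n+1)).point

/-- The left-associated iterated smash product `⋀_{i ≤ n} A_i`. -/
def bigSmash (A : ℕ → Pointed.{u}) : ℕ → Pointed.{u}
  | 0 => A 0
  | n+1 => pSmash (bigSmash A n) (A (n+1))

/-- The point constructor `⟨a_0, …, a_n⟩` of `⋀_{i ≤ n} A_i`. -/
def bigMk (A : ℕ → Pointed.{u}) : (n : ℕ) → (∀ i : Fin (n+1), A i) → bigSmash A n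
  | 0, v => v 0
  | n+1, v =>
      Smash.mk (A := bigSmash A n) (B := A (n+1))
        (bigMk A n fun i => v i.castSucc) (v (Fin.last (n+1)))

/-- `⋀̃_{i ≤ n} A_i`, the cofibre of `γ_n`. -/
def TildeBig (A : ℕ → Pointed.{u}) (n : ℕ) : Type u := Cofiber (gamma A n)

/-- the composite `FS_{i≤n}(A_i) → A_0 × ⋯ × A_n → ⋀_{i≤n} A_i` is
null-homotopic, and there is an induced basepoint-preserving map
`ι : ⋀̃_{i≤n} A_i → ⋀_{i≤n} A_i` with `ι⟨a_0,…,a_n⟩ = ⟨a_0,…,a_n⟩`. -/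
theorem tilde_incl_exists (A : ℕ → Pointed.{u}) (n : ℕ) :
    (∀ x : FS A n, bigMk A n (gamma A n x) = (bigSmash A n).point) ∧
    ∃ ι : TildeBig A n → bigSmash A n,
      ι (Cofiber.base (gamma A n)) = (bigSmash A n).point ∧
      ∀ v : ∀ i : Fin (n+1), A i, ι (Cofiber.incl (gamma A n) v) = bigMk A n v := by
  have hnull : ∀ x : FS A n, bigMk A n (gamma A n x) = (bigSmash A n).point := by
    induction n with
    | zero => intro x; rfl
    | succ n ih =>
      intro x
      have hsnoc : ∀ (w : ∀ i : Fin (n+1), A i) (a : A (n+1)),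
          bigMk A (n+1) (Fin.snoc w a) =
            Smash.mk (A := bigSmash A n) (B := A (n+1)) (bigMk A n w) a := by
        intro w a
        simp only [bigMk, Fin.snoc_castSucc, Fin.snoc_last]
        rfl
      rcases x with ⟨y, a⟩ | v
      · show bigMk A (n+1) (Fin.snoc (gamma A n y) a) = Smash.pt
        rw [hsnoc, ih y]
        exact Smash.pushr a
      · show bigMk A (n+1) (Fin.snoc v (A (n+1)).point) = Smash.pt
        rw [hsnoc]
        exact Smash.pushl _
  refine ⟨hnull, Quot.lift (Sum.elim (bigMk A n) (fun _ => (bigSmash A n).point)) ?_,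
    rfl, fun v => rfl⟩
  rintro _ _ ⟨w⟩
  exact hnull w

end SmashPaper
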